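/- Closed-form direct data-driven control input: let U ∈ ℝ^{mT×N}, Y ∈ ℝ^{pT×N}, Q ∈ ℝ^{mT×mT} and R ∈ ℝ^{pT×pT} symmetric positive definite, y_ref ∈ ℝ^{pT}, and Y|U = Y U†U. Then every minimizer z* of z ↦ (Uz)ᵀ Q (Uz) + (Y|U z − y_ref)ᵀ R (Y|U z − y_ref) over z ∈ ℝ^N satisfies the normal equations (Uᵀ Q U + Y|Uᵀ R Y|U) z* = Y|Uᵀ R y_ref, and û = U z* with z* = (Uᵀ Q U + Y|Uᵀ R Y|U)† Y|Uᵀ R y_ref is such a minimizer's image. -/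

import Mathlib

open Matrix

/-- Closed-form direct data-driven control input. With `Y|U = Y U† U`,
every minimizer `z*` of `z ↦ (Uz)ᵀQ(Uz) + (Y|U z - y_ref)ᵀR(Y|U z - y_ref)` satisfies
the normal equations `(UᵀQU + Y|UᵀR Y|U) z* = Y|UᵀR y_ref`, and
`z* = (UᵀQU + Y|UᵀR Y|U)† Y|UᵀR y_ref` is a minimizer. -/
theorem stmt19 {a b N : ℕ}
    (U : Matrix (Fin a) (Fin N) ℝ) (Y : Matrix (Fin b) (Fin N) ℝ)
    (Q : Matrix (Fin a) (Fin a) ℝ) (hQ : Q.PosDef)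
    (R : Matrix (Fin b) (Fin b) ℝ) (hR : R.PosDef)
    (yref : Fin b → ℝ)
    -- Moore–Penrose pseudoinverse of U
    (Udag : Matrix (Fin N) (Fin a) ℝ)
    (hU1 : U * Udag * U = U) (hU2 : Udag * U * Udag = Udag)
    (hU3 : (U * Udag)ᵀ = U * Udag) (hU4 : (Udag * U)ᵀ = Udag * U)
    (YU : Matrix (Fin b) (Fin N) ℝ) (hYU : YU = Y * (Udag * U))
    (f : (Fin N → ℝ) → ℝ)
    (hf : ∀ z, f z = U.mulVec z ⬝ᵥ Q.mulVec (U.mulVec z)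
      + (YU.mulVec z - yref) ⬝ᵥ R.mulVec (YU.mulVec z - yref))
    (K : Matrix (Fin N) (Fin N) ℝ) (hK : K = Uᵀ * Q * U + YUᵀ * R * YU)
    -- Moore–Penrose pseudoinverse of K
    (Kdag : Matrix (Fin N) (Fin N) ℝ)
    (hK1 : K * Kdag * K = K) (hK2 : Kdag * K * Kdag = Kdag)
    (hK3 : (K * Kdag)ᵀ = K * Kdag) (hK4 : (Kdag * K)ᵀ = Kdag * K) :
    (∀ zstar : Fin N → ℝ, (∀ z, f zstar ≤ f z) →
        K.mulVec zstar = (YUᵀ * R).mulVec yref) ∧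
      (∀ z, f (Kdag.mulVec ((YUᵀ * R).mulVec yref)) ≤ f z) := by
  -- symmetry of Q, R, K
  have hQs : Qᵀ = Q := by have h : Q.IsSymm := by simpa using hQ.1
                          exact h.eq
  have hRs : Rᵀ = R := by have h : R.IsSymm := by simpa using hR.1
                          exact h.eq
  have hKs : Kᵀ = K := by
    subst hK
    simp [Matrix.transpose_add, Matrix.transpose_mul, hQs, hRs, Matrix.mul_assoc]
  set bv : Fin N → ℝ := (YUᵀ * R).mulVec yref with hbv
  -- quadratic form identity
  have hquad : ∀ z, z ⬝ᵥ K.mulVec z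
      = U.mulVec z ⬝ᵥ Q.mulVec (U.mulVec z) + YU.mulVec z ⬝ᵥ R.mulVec (YU.mulVec z) := by
    intro z
    rw [hK, Matrix.add_mulVec, dotProduct_add]
    congr 1 <;>
    · rw [← Matrix.mulVec_mulVec, ← Matrix.mulVec_mulVec, Matrix.dotProduct_mulVec,
        Matrix.vecMul_transpose]
  -- symmetric dot-product lemmas
  have sdR : ∀ v w, v ⬝ᵥ R.mulVec w = w ⬝ᵥ R.mulVec v := by
    intro v w
    rw [Matrix.dotProduct_mulVec, ← Matrix.mulVec_transpose, hRs, dotProduct_comm]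
  have sdK : ∀ v w, v ⬝ᵥ K.mulVec w = w ⬝ᵥ K.mulVec v := by
    intro v w
    rw [Matrix.dotProduct_mulVec, ← Matrix.mulVec_transpose, hKs, dotProduct_comm]
  -- linear term identity
  have hlin : ∀ z, bv ⬝ᵥ z = YU.mulVec z ⬝ᵥ R.mulVec yref := by
    intro z
    rw [hbv, ← Matrix.mulVec_mulVec, dotProduct_comm, Matrix.dotProduct_mulVec,
      Matrix.vecMul_transpose]
  -- expansion of f
  have hfeq : ∀ z, f z = z ⬝ᵥ K.mulVec z - 2 * (bv ⬝ᵥ z) + yref ⬝ᵥ R.mulVec yref := by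
    intro z
    rw [hf, hquad, hlin]
    have h1 : (YU.mulVec z - yref) ⬝ᵥ R.mulVec (YU.mulVec z - yref)
        = YU.mulVec z ⬝ᵥ R.mulVec (YU.mulVec z)
          - YU.mulVec z ⬝ᵥ R.mulVec yref - yref ⬝ᵥ R.mulVec (YU.mulVec z)
          + yref ⬝ᵥ R.mulVec yref := by
      rw [Matrix.mulVec_sub, sub_dotProduct, dotProduct_sub, dotProduct_sub]
      ring
    rw [h1, sdR yref (YU.mulVec z)]
    ring
  -- positive semidefiniteness of the quadratic form
  have hQpsd : ∀ v : Fin a → ℝ, 0 ≤ v ⬝ᵥ Q.mulVec v := by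
    intro v; simpa using hQ.posSemidef.dotProduct_mulVec_nonneg v
  have hRpsd : ∀ v : Fin b → ℝ, 0 ≤ v ⬝ᵥ R.mulVec v := by
    intro v; simpa using hR.posSemidef.dotProduct_mulVec_nonneg v
  have hKpsd : ∀ v, 0 ≤ v ⬝ᵥ K.mulVec v := by
    intro v
    rw [hquad]
    exact add_nonneg (hQpsd _) (hRpsd _)
  -- kernel of K kills YU
  have hker : ∀ w, K.mulVec w = 0 → YU.mulVec w = 0 := by
    intro w hw
    have h0 : U.mulVec w ⬝ᵥ Q.mulVec (U.mulVec w) + YU.mulVec w ⬝ᵥ R.mulVec (YU.mulVec w)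
        = 0 := by rw [← hquad, hw, dotProduct_zero]
    by_contra hne
    have hpos : 0 < YU.mulVec w ⬝ᵥ R.mulVec (YU.mulVec w) := by
      simpa using hR.dotProduct_mulVec_pos hne
    have := hQpsd (U.mulVec w)
    linarith
  clear_value bv
  -- key matrix identity : K * (K * Kdag) = K
  have hKK : K * (K * Kdag) = K := by
    have h := congrArg Matrix.transpose hK1
    rwa [Matrix.transpose_mul (K * Kdag) K, hK3, hKs] at h
  -- K Kdag bv = bv
  have hfix : K.mulVec (Kdag.mulVec bv) = bv := by
    set w : Fin N → ℝ := bv - (K * Kdag).mulVec bv with hw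
    have hKw : K.mulVec w = 0 := by
      rw [hw, Matrix.mulVec_sub, Matrix.mulVec_mulVec, hKK, sub_self]
    have hYUw : YU.mulVec w = 0 := hker w hKw
    have h1 : w ⬝ᵥ bv = 0 := by
      rw [dotProduct_comm, hlin, hYUw, zero_dotProduct]
    have h2 : w ⬝ᵥ (K * Kdag).mulVec bv = 0 := by
      have hP : (K * Kdag).mulVec w = 0 := by
        have : K * Kdag = Kdagᵀ * K := by
          rw [← hK3, Matrix.transpose_mul, hKs]
        rw [this, ← Matrix.mulVec_mulVec, hKw, Matrix.mulVec_zero]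
      rw [Matrix.dotProduct_mulVec, ← Matrix.mulVec_transpose, hK3, hP, zero_dotProduct]
    have h3 : w ⬝ᵥ w = 0 := by
      calc w ⬝ᵥ w = w ⬝ᵥ bv - w ⬝ᵥ (K * Kdag).mulVec bv := by
            rw [hw]; rw [dotProduct_sub]
        _ = 0 := by rw [h1, h2, sub_zero]
    have hw0 : w = 0 := dotProduct_self_eq_zero.mp h3
    have h4 : (K * Kdag).mulVec bv = bv := by
      have h5 := sub_eq_zero.mp (hw ▸ hw0 : bv - (K * Kdag).mulVec bv = 0)
      exact h5.symm
    rw [← Matrix.mulVec_mulVec] at h4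
    exact h4
  constructor
  · -- every minimizer satisfies the normal equations
    intro zstar hmin
    set w : Fin N → ℝ := K.mulVec zstar - bv with hw
    suffices hw0 : w = 0 by
      exact sub_eq_zero.mp (hw ▸ hw0 : K.mulVec zstar - bv = 0)
    by_contra hne
    set s : ℝ := w ⬝ᵥ w with hs
    set q : ℝ := w ⬝ᵥ K.mulVec w with hq
    have hspos : 0 < s := by
      rcases lt_or_eq_of_le ((dotProduct_self_star_nonneg w : (0:ℝ) ≤ w ⬝ᵥ w)) with h | h
      · exact h
      · exact absurd (dotProduct_self_eq_zero.mp h.symm) hne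
    have hqnn : 0 ≤ q := hKpsd w
    set t : ℝ := -(s / (q + 1)) with ht
    have hq1 : (0:ℝ) < q + 1 := by linarith
    have htneg : t < 0 := by
      rw [ht]
      exact neg_neg_iff_pos.mpr (div_pos hspos hq1)
    have hts : t * (q + 1) = -s := by
      rw [ht]; field_simp
    -- expansion of f at zstar + t • w
    have hexp : f (zstar + t • w) = f zstar + t ^ 2 * q + 2 * t * s := by
      rw [hfeq, hfeq]
      have e1 : (zstar + t • w) ⬝ᵥ K.mulVec (zstar + t • w)
          = zstar ⬝ᵥ K.mulVec zstar + 2 * t * (w ⬝ᵥ K.mulVec zstar) + t ^ 2 * q := by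
        rw [Matrix.mulVec_add, Matrix.mulVec_smul, dotProduct_add, add_dotProduct,
          add_dotProduct, dotProduct_smul, dotProduct_smul, smul_dotProduct,
          smul_dotProduct, sdK zstar w, hq]
        simp [smul_eq_mul]
        ring
      have e2 : bv ⬝ᵥ (zstar + t • w) = bv ⬝ᵥ zstar + t * (bv ⬝ᵥ w) := by
        rw [dotProduct_add, dotProduct_smul, smul_eq_mul]
      have e3 : s = w ⬝ᵥ K.mulVec zstar - bv ⬝ᵥ w := by
        rw [hs]
        nth_rewrite 1 [hw]
        rw [dotProduct_comm w (K.mulVec zstar - bv), sub_dotProduct,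
          dotProduct_comm (K.mulVec zstar) w, dotProduct_comm bv w]
      rw [e1, e2]
      rw [e3]
      ring
    have hle := hmin (zstar + t • w)
    rw [hexp] at hle
    have hkey : t ^ 2 * q + 2 * t * s < 0 := by
      have ht2 : 0 < t * t := mul_pos_of_neg_of_neg htneg htneg
      nlinarith [hts, ht2, hqnn]
    linarith
  · -- the pseudoinverse solution is a minimizer
    intro z
    set z0 : Fin N → ℝ := Kdag.mulVec bv with hz0
    have hKz0 : K.mulVec z0 = bv := hfix
    have hnn : 0 ≤ (z - z0) ⬝ᵥ K.mulVec (z - z0) := hKpsd _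
    have hexp : (z - z0) ⬝ᵥ K.mulVec (z - z0)
        = z ⬝ᵥ K.mulVec z - 2 * (bv ⬝ᵥ z) + z0 ⬝ᵥ bv := by
      rw [Matrix.mulVec_sub, dotProduct_sub, sub_dotProduct, sub_dotProduct,
        sdK z0 z, hKz0, dotProduct_comm bv z]
      ring
    rw [hfeq, hfeq]
    have h0 : z0 ⬝ᵥ K.mulVec z0 = z0 ⬝ᵥ bv := by rw [hKz0]
    have hb0 : bv ⬝ᵥ z0 = z0 ⬝ᵥ bv := dotProduct_comm _ _
    rw [h0, hb0] at *
    linarith [hnn, hexp ▸ hnn]
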